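/- Let n = 5/2, q = −4, k > 0, and let c ∈ ℝ. Fix a sign ε ∈ {1, −1} and define w(t,r) = ε·√k·(1 + c(3t + r²))·(3t/r + r). Then u(t,r) = w(t,r)^{1/2} is a positive solution of the semilinear radial heat equation u_t = u_rr + (3/2) r⁻¹ u_r + k u^{−3} on any open subset of {(t,r) : r > 0, w(t,r) > 0}. -/

import Mathlib

noncomputable section

def pdt (u : ℝ × ℝ → ℝ) (p : ℝ × ℝ) : ℝ := deriv (fun s => u (s, p.2)) p.1

def pdr (u : ℝ × ℝ → ℝ) (p : ℝ × ℝ) : ℝ := deriv (fun s => u (p.1, s)) p.2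

def pdrr (u : ℝ × ℝ → ℝ) (p : ℝ × ℝ) : ℝ :=
  deriv (fun s => deriv (fun s' => u (p.1, s')) s) p.2

/-- The semilinear radial heat equation for `n = 5/2`, `q = -4`:
`u_t = u_rr + (3/2) r⁻¹ u_r + k u^(-3)`. -/
def HeatEqM3 (k : ℝ) (u : ℝ × ℝ → ℝ) (p : ℝ × ℝ) : Prop :=
  pdt u p = pdrr u p + (3 / 2) * (p.2)⁻¹ * pdr u p + k * u p ^ (-3 : ℤ)

set_option maxHeartbeats 1000000 in
lemma hadWt (s c r t : ℝ) :
    HasDerivAt (fun x : ℝ => s*(1+c*(3*x+r^2))*(3*x/r+r))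
      (s*(c*3)*(3*t/r+r) + s*(1+c*(3*t+r^2))*(3/r)) t := by
  have h1 : HasDerivAt (fun x : ℝ => s*(1+c*(3*x+r^2))) (s*(c*3)) t := by
    simpa using ((((hasDerivAt_id t).const_mul (3:ℝ)).add_const (r^2)).const_mul c).const_add (1:ℝ) |>.const_mul s
  have h2 : HasDerivAt (fun x : ℝ => 3*x/r+r) (3/r) t := by
    simpa [div_eq_mul_inv] using (((hasDerivAt_id t).const_mul (3:ℝ)).div_const r).add_const r
  exact h1.mul h2

lemma hadWr (s c t : ℝ) {x : ℝ} (hx : x ≠ 0) :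
    HasDerivAt (fun y : ℝ => s*(1+c*(3*t+y^2))*(3*t/y+y))
      (s*(c*(2*x))*(3*t/x+x) + s*(1+c*(3*t+x^2))*(1-3*t/x^2)) x := by
  have h1 : HasDerivAt (fun y : ℝ => s*(1+c*(3*t+y^2))) (s*(c*(2*x))) x := by
    simpa using (((hasDerivAt_pow 2 x).const_add (3*t)).const_mul c).const_add (1:ℝ) |>.const_mul s
  have h2 : HasDerivAt (fun y : ℝ => 3*t/y+y) (1-3*t/x^2) x := by
    have h3 : HasDerivAt (fun y : ℝ => 3*t/y) ((0 * x - 3*t*1)/x^2) x :=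
      (hasDerivAt_const x (3*t)).div (hasDerivAt_id x) hx
    have : HasDerivAt (fun y : ℝ => 3*t/y+y) ((0 * x - 3*t*1)/x^2 + 1) x := h3.add (hasDerivAt_id x)
    convert this using 1
    field_simp
    ring
  exact h1.mul h2

lemma hadWrr (s c t : ℝ) {x : ℝ} (hx : x ≠ 0) :
    HasDerivAt (fun y : ℝ => s*(c*(2*y))*(3*t/y+y) + s*(1+c*(3*t+y^2))*(1-3*t/y^2))
      ((s*(c*2)*(3*t/x+x) + s*(c*(2*x))*(1-3*t/x^2))
        + (s*(c*(2*x))*(1-3*t/x^2) + s*(1+c*(3*t+x^2))*(6*t/x^3))) x := by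
  have hA : HasDerivAt (fun y : ℝ => s*(c*(2*y))) (s*(c*2)) x := by
    simpa [mul_assoc] using ((hasDerivAt_id x).const_mul (2:ℝ)).const_mul c |>.const_mul s
  have hB : HasDerivAt (fun y : ℝ => 3*t/y+y) (1-3*t/x^2) x := by
    have h3 : HasDerivAt (fun y : ℝ => 3*t/y) ((0 * x - 3*t*1)/x^2) x :=
      (hasDerivAt_const x (3*t)).div (hasDerivAt_id x) hx
    have : HasDerivAt (fun y : ℝ => 3*t/y+y) ((0 * x - 3*t*1)/x^2 + 1) x := h3.add (hasDerivAt_id x)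
    convert this using 1
    field_simp
    ring
  have hC : HasDerivAt (fun y : ℝ => s*(1+c*(3*t+y^2))) (s*(c*(2*x))) x := by
    simpa using (((hasDerivAt_pow 2 x).const_add (3*t)).const_mul c).const_add (1:ℝ) |>.const_mul s
  have hD : HasDerivAt (fun y : ℝ => 1-3*t/y^2) (6*t/x^3) x := by
    have h3 : HasDerivAt (fun y : ℝ => 3*t/y^2) ((0 * x^2 - 3*t*(2*x^1))/(x^2)^2) x :=
      (hasDerivAt_const x (3*t)).div (by simpa using hasDerivAt_pow 2 x) (pow_ne_zero 2 hx)
    have : HasDerivAt (fun y : ℝ => 1-3*t/y^2) (-((0 * x^2 - 3*t*(2*x^1))/(x^2)^2)) x := (h3.const_sub 1)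
    convert this using 1
    field_simp
    ring
  exact (hA.mul hB).add (hC.mul hD)


/-- the exact solution `u = w^(1/2)` with
`w(t,r) = ε √k (1 + c(3t + r²)) (3t/r + r)`, for `n = 5/2`, `q = -4`, `k > 0`. -/
theorem exact_solution_sqrt (k c e : ℝ) (hk : 0 < k) (he : e = 1 ∨ e = -1)
    (D : Set (ℝ × ℝ)) (hD : IsOpen D)
    (hDsub : D ⊆ {p : ℝ × ℝ | 0 < p.2 ∧
      0 < e * Real.sqrt k * (1 + c * (3 * p.1 + p.2 ^ 2)) * (3 * p.1 / p.2 + p.2)}) :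
    ∀ p ∈ D,
      0 < (fun p : ℝ × ℝ =>
          (e * Real.sqrt k * (1 + c * (3 * p.1 + p.2 ^ 2))
            * (3 * p.1 / p.2 + p.2)) ^ ((1 : ℝ) / 2)) p ∧
      HeatEqM3 k (fun p : ℝ × ℝ =>
          (e * Real.sqrt k * (1 + c * (3 * p.1 + p.2 ^ 2))
            * (3 * p.1 / p.2 + p.2)) ^ ((1 : ℝ) / 2)) p := by

  intro p hp
  obtain ⟨t, r⟩ := p
  obtain ⟨hr, hw0⟩ := hDsub hp
  simp only [Set.mem_setOf_eq] at hr hw0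
  set s : ℝ := e * Real.sqrt k with hs
  have hs2 : s ^ 2 = k := by
    have h1 : s ^ 2 = e ^ 2 * Real.sqrt k ^ 2 := by rw [hs]; ring
    rw [h1, Real.sq_sqrt hk.le]
    rcases he with h | h <;> rw [h] <;> ring
  -- hr : 0 < r, hw0 : 0 < s*(1+c*(3*t+r^2))*(3*t/r+r)
  constructor
  · exact Real.rpow_pos_of_pos hw0 _
  unfold HeatEqM3 pdt pdr pdrr
  simp only
  have hwr : (0:ℝ) < s*(1+c*(3*t+r^2))*(3*t/r+r) := hw0
  -- pdt
  have hT := ((hadWt s c r t).rpow_const (p := (1:ℝ)/2) (Or.inl hwr.ne')).deriv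
  -- pdr
  have hR := ((hadWr s c t hr.ne').rpow_const (p := (1:ℝ)/2) (Or.inl hwr.ne')).deriv
  -- pdrr : first identify the inner derivative on a neighborhood
  set S : Set ℝ := {x | 0 < x} ∩ {x | 0 < s*(1+c*(3*t+x^2))*(3*t+x^2)} with hSdef
  have hSopen : IsOpen S := by
    apply IsOpen.inter
    · exact isOpen_lt continuous_const continuous_id
    · exact isOpen_lt continuous_const (by fun_prop)
  have hWpos : ∀ x ∈ S, (0:ℝ) < s*(1+c*(3*t+x^2))*(3*t/x+x) := by
    rintro x ⟨hx1, hx2⟩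
    have hne : x ≠ 0 := ne_of_gt hx1
    have : s*(1+c*(3*t+x^2))*(3*t/x+x) = s*(1+c*(3*t+x^2))*(3*t+x^2) / x := by
      field_simp
    rw [this]
    exact div_pos hx2 hx1
  have hrS : r ∈ S := by
    constructor
    · exact hr
    · show (0:ℝ) < s*(1+c*(3*t+r^2))*(3*t+r^2)
      have : s*(1+c*(3*t+r^2))*(3*t+r^2) = (s*(1+c*(3*t+r^2))*(3*t/r+r)) * r := by
        field_simp
      rw [this]
      exact mul_pos hwr hr
  have hev : (fun x => deriv (fun y => (s*(1+c*(3*t+y^2))*(3*t/y+y))^((1:ℝ)/2)) x)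
      =ᶠ[nhds r] (fun x => (s*(c*(2*x))*(3*t/x+x) + s*(1+c*(3*t+x^2))*(1-3*t/x^2))
        * ((1:ℝ)/2) * (s*(1+c*(3*t+x^2))*(3*t/x+x)) ^ ((1:ℝ)/2 - 1)) := by
    filter_upwards [hSopen.mem_nhds hrS] with x hx
    exact ((hadWr s c t (ne_of_gt hx.1)).rpow_const (p := (1:ℝ)/2) (Or.inl (hWpos x hx).ne')).deriv
  have hG : HasDerivAt (fun x => (s*(c*(2*x))*(3*t/x+x) + s*(1+c*(3*t+x^2))*(1-3*t/x^2))
        * ((1:ℝ)/2) * (s*(1+c*(3*t+x^2))*(3*t/x+x)) ^ ((1:ℝ)/2 - 1))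
      ((((s*(c*2)*(3*t/r+r) + s*(c*(2*r))*(1-3*t/r^2))
        + (s*(c*(2*r))*(1-3*t/r^2) + s*(1+c*(3*t+r^2))*(6*t/r^3))) * ((1:ℝ)/2))
        * ((s*(1+c*(3*t+r^2))*(3*t/r+r)) ^ ((1:ℝ)/2 - 1))
       + ((s*(c*(2*r))*(3*t/r+r) + s*(1+c*(3*t+r^2))*(1-3*t/r^2)) * ((1:ℝ)/2))
        * ((s*(c*(2*r))*(3*t/r+r) + s*(1+c*(3*t+r^2))*(1-3*t/r^2)) * ((1:ℝ)/2 - 1)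
            * (s*(1+c*(3*t+r^2))*(3*t/r+r)) ^ ((1:ℝ)/2 - 1 - 1))) r :=
    ((hadWrr s c t hr.ne').mul_const ((1:ℝ)/2)).mul
      ((hadWr s c t hr.ne').rpow_const (p := (1:ℝ)/2 - 1) (Or.inl hwr.ne'))
  have hRR : deriv (fun x => deriv (fun y => (s*(1+c*(3*t+y^2))*(3*t/y+y))^((1:ℝ)/2)) x) r
      = _ := hev.deriv_eq.trans hG.deriv
  rw [hT, hR, hRR]
  -- abbreviations
  set w : ℝ := s*(1+c*(3*t+r^2))*(3*t/r+r) with hwdef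
  set y : ℝ := w ^ ((1:ℝ)/2) with hydef
  have hy : 0 < y := Real.rpow_pos_of_pos hwr _
  have hy2 : y ^ 2 = w := by
    rw [hydef, ← Real.rpow_natCast (w ^ ((1:ℝ)/2)) 2, ← Real.rpow_mul hwr.le]
    norm_num
  have hy3 : y ^ 3 = w ^ ((3:ℝ)/2) := by
    rw [hydef, ← Real.rpow_natCast (w ^ ((1:ℝ)/2)) 3, ← Real.rpow_mul hwr.le]
    norm_num
  have E1 : w ^ ((1:ℝ)/2 - 1) = y⁻¹ := by
    rw [show ((1:ℝ)/2 - 1) = -(1/2) by norm_num, Real.rpow_neg hwr.le, hydef]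
  have E2 : w ^ ((1:ℝ)/2 - 1 - 1) = (y^3)⁻¹ := by
    rw [show ((1:ℝ)/2 - 1 - 1) = -(3/2) by norm_num, Real.rpow_neg hwr.le, hy3]
  have E3 : y ^ (-3:ℤ) = (y^3)⁻¹ := by
    rw [zpow_neg]
    norm_cast
  rw [E1, E2, E3]
  set A : ℝ := s*(c*3)*(3*t/r+r) + s*(1+c*(3*t+r^2))*(3/r) with hA
  set B : ℝ := s*(c*(2*r))*(3*t/r+r) + s*(1+c*(3*t+r^2))*(1-3*t/r^2) with hB
  set C : ℝ := (s*(c*2)*(3*t/r+r) + s*(c*(2*r))*(1-3*t/r^2))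
        + (s*(c*(2*r))*(1-3*t/r^2) + s*(1+c*(3*t+r^2))*(6*t/r^3)) with hC
  have key : 2*(y^2)*A = 2*(y^2)*C - B^2 + 3/r*(y^2)*B + 4*k := by
    rw [hy2, ← hs2, hwdef, hA, hB, hC]
    field_simp
    ring
  rw [← sub_eq_zero]
  have expand : A * (1/2) * y⁻¹ - (C * (1/2) * y⁻¹ + B * (1/2) * (B * (1/2-1) * (y^3)⁻¹)
      + 3 / 2 * r⁻¹ * (B * (1/2) * y⁻¹) + k * (y^3)⁻¹)
      = (2*y^2*A - (2*y^2*C - B^2 + 3/r*y^2*B + 4*k)) / (4*y^3) := by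
    field_simp
    ring
  have hnum : 2*y^2*A - (2*y^2*C - B^2 + 3/r*y^2*B + 4*k) = 0 := by
    rw [key]; ring
  rw [expand, hnum, zero_div]
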